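/- Fix integers d, K, T ≥ 1 and reals λ > 0, β > 0, L > 0, ρ > 0, Δ > 0 with Δ ≤ 2Lρ. Let x_1,…,x_T ∈ ℝ^d satisfy ‖x_t‖₂ ≤ β for all t, let a_1,…,a_T ∈ {1,…,K}, and for each t and each arm a define V_{t,a} := λ·I_d + ∑_{s<t, a_s=a} x_s x_sᵀ. Then the number of rounds t ∈ {1,…,T} for which 2Lρ·‖x_t‖_{V_{t,a_t}⁻¹} > Δ is at most (8L²ρ²/Δ²) · d·K · log(1 + β²T/(λ·d·K)). -/

import Mathlib

/-- Euclidean dot product on `ℝ^d`. -/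
def dotp {d : ℕ} (v w : Fin d → ℝ) : ℝ := ∑ i, v i * w i

/-- Euclidean norm on `ℝ^d`. -/
noncomputable def norm2 {d : ℕ} (u : Fin d → ℝ) : ℝ := Real.sqrt (∑ i, u i ^ 2)

/-- The Mahalanobis-type norm `‖u‖_V = √(uᵀ V u)` associated with a matrix `V`. -/
noncomputable def normV {d : ℕ} (V : Matrix (Fin d) (Fin d) ℝ) (u : Fin d → ℝ) : ℝ :=
  Real.sqrt (dotp u (V.mulVec u))

/-- The per-arm regularized design matrix
`V_{t,a} = λ·I_d + ∑_{s < t, a_s = a} x_s x_sᵀ`. -/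
noncomputable def design {d T K : ℕ} (lam : ℝ) (x : Fin T → Fin d → ℝ)
    (a : Fin T → Fin K) (t : Fin T) (b : Fin K) : Matrix (Fin d) (Fin d) ℝ :=
  lam • (1 : Matrix (Fin d) (Fin d) ℝ) +
    ∑ s ∈ Finset.univ.filter (fun s : Fin T => s < t ∧ a s = b),
      Matrix.vecMulVec (x s) (x s)

open Matrix Finset in
noncomputable def Mdes {d T K : ℕ} (lam : ℝ) (x : Fin T → Fin d → ℝ)
    (a : Fin T → Fin K) (n : ℕ) (b : Fin K) : Matrix (Fin d) (Fin d) ℝ :=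
  lam • (1 : Matrix (Fin d) (Fin d) ℝ) +
    ∑ s ∈ Finset.univ.filter (fun s : Fin T => (s : ℕ) < n ∧ a s = b),
      Matrix.vecMulVec (x s) (x s)

open Matrix in
lemma psd_vmv {d : ℕ} (v : Fin d → ℝ) : (Matrix.vecMulVec v v).PosSemidef := by
  refine Matrix.PosSemidef.of_dotProduct_mulVec_nonneg ?_ ?_
  · ext i j
    simp [Matrix.IsHermitian, conjTranspose_apply, vecMulVec_apply, mul_comm]
  · intro y
    have h : vecMulVec v v *ᵥ y = (v ⬝ᵥ y) • v := by
      funext i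
      simp only [mulVec, dotProduct, vecMulVec_apply, Pi.smul_apply, smul_eq_mul,
        Finset.sum_mul, of_apply]
      exact Finset.sum_congr rfl fun j _ => by ring
    rw [h]
    simp only [star_trivial, dotProduct_smul, smul_eq_mul]
    rw [dotProduct_comm]
    exact mul_self_nonneg _

open Matrix in
lemma posdef_smul_one {d : ℕ} {lam : ℝ} (hlam : 0 < lam) :
    (lam • (1 : Matrix (Fin d) (Fin d) ℝ)).PosDef := by
  refine Matrix.PosDef.of_dotProduct_mulVec_pos ?_ ?_
  · ext i j
    simp [conjTranspose_apply, Matrix.one_apply]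
    split <;> simp_all [eq_comm]
  · intro y hy
    rw [smul_mulVec, one_mulVec]
    simp only [star_trivial, dotProduct_smul, smul_eq_mul]
    exact mul_pos hlam (Matrix.dotProduct_star_self_pos_iff.mpr hy)

open Matrix Finset in
lemma posdef_Mdes {d T K : ℕ} {lam : ℝ} (hlam : 0 < lam) (x : Fin T → Fin d → ℝ)
    (a : Fin T → Fin K) (n : ℕ) (b : Fin K) : (Mdes lam x a n b).PosDef := by
  refine (posdef_smul_one hlam).add_posSemidef ?_
  exact Finset.sum_induction _ (fun A : Matrix (Fin d) (Fin d) ℝ => A.PosSemidef)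
    (fun A B hA hB => hA.add hB) Matrix.PosSemidef.zero (fun s _ => psd_vmv _)

open Matrix Finset in
lemma Mdes_succ {d T K : ℕ} (lam : ℝ) (x : Fin T → Fin d → ℝ)
    (a : Fin T → Fin K) (n : ℕ) (hn : n < T) (b : Fin K) :
    Mdes lam x a (n + 1) b = Mdes lam x a n b +
      (if a ⟨n, hn⟩ = b then Matrix.vecMulVec (x ⟨n, hn⟩) (x ⟨n, hn⟩) else 0) := by
  unfold Mdes
  rw [add_assoc]
  congr 1
  have hsplit : Finset.univ.filter (fun s : Fin T => (s : ℕ) < n + 1 ∧ a s = b) =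
      Finset.univ.filter (fun s : Fin T => (s : ℕ) < n ∧ a s = b) ∪
      Finset.univ.filter (fun s : Fin T => s = ⟨n, hn⟩ ∧ a s = b) := by
    ext s
    simp only [Finset.mem_filter, Finset.mem_union, Finset.mem_univ, true_and,
      Nat.lt_succ_iff_lt_or_eq, Fin.ext_iff]
    tauto
  have hdisj : Disjoint (Finset.univ.filter (fun s : Fin T => (s : ℕ) < n ∧ a s = b))
      (Finset.univ.filter (fun s : Fin T => s = ⟨n, hn⟩ ∧ a s = b)) := by
    rw [Finset.disjoint_left]
    rintro s hs1 hs2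
    simp only [Finset.mem_filter] at hs1 hs2
    rw [hs2.2.1] at hs1
    exact absurd hs1.2.1 (lt_irrefl n)
  have hsum2 : Finset.univ.filter (fun s : Fin T => s = ⟨n, hn⟩ ∧ a s = b) =
      if a ⟨n, hn⟩ = b then {(⟨n, hn⟩ : Fin T)} else ∅ := by
    by_cases h : a ⟨n, hn⟩ = b
    · rw [if_pos h]
      ext s
      simp only [Finset.mem_filter, Finset.mem_univ, true_and, Finset.mem_singleton]
      exact ⟨fun hh => hh.1, fun hh => ⟨hh, hh ▸ h⟩⟩
    · rw [if_neg h]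
      ext s
      simp only [Finset.mem_filter, Finset.mem_univ, true_and, Finset.notMem_empty, iff_false]
      rintro ⟨rfl, h2⟩
      exact h h2
  rw [hsplit, Finset.sum_union hdisj, hsum2]
  congr 1
  by_cases h : a ⟨n, hn⟩ = b
  · rw [if_pos h, if_pos h, Finset.sum_singleton]
  · rw [if_neg h, if_neg h, Finset.sum_empty]

open Matrix in
lemma det_add_vmv {d : ℕ} {A : Matrix (Fin d) (Fin d) ℝ} (hA : A.PosDef) (v : Fin d → ℝ) :
    (A + Matrix.vecMulVec v v).det = A.det * (1 + v ⬝ᵥ (A⁻¹ *ᵥ v)) := by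
  rw [Matrix.vecMulVec_eq Unit,
    Matrix.det_add_replicateCol_mul_replicateRow (isUnit_iff_ne_zero.mpr hA.det_pos.ne') v v]
  congr 1
  rw [Matrix.mul_assoc, ← Matrix.replicateCol_mulVec, Matrix.det_unique]
  simp [Matrix.replicateRow_mul_replicateCol_apply]

open Matrix in
lemma trace_eq_sum_eigs {n : Type*} [Fintype n] [DecidableEq n] {A : Matrix n n ℝ}
    (hA : A.IsHermitian) : A.trace = ∑ i, hA.eigenvalues i := by
  nth_rewrite 1 [hA.spectral_theorem]
  rw [Unitary.conjStarAlgAut_apply]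
  rw [Matrix.trace_mul_cycle]
  have h1 : (star (hA.eigenvectorUnitary : Matrix n n ℝ)) * (hA.eigenvectorUnitary : Matrix n n ℝ)
      = 1 := by
    simpa using Unitary.coe_star_mul_self hA.eigenvectorUnitary
  rw [h1, Matrix.one_mul, Matrix.trace_diagonal]
  simp

open Matrix Finset in
lemma q_nonneg {d T K : ℕ} {lam : ℝ} (hlam : 0 < lam) (x : Fin T → Fin d → ℝ)
    (a : Fin T → Fin K) (n : ℕ) (b : Fin K) (v : Fin d → ℝ) :
    0 ≤ v ⬝ᵥ ((Mdes lam x a n b)⁻¹ *ᵥ v) := by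
  have h := ((posdef_Mdes hlam x a n b).inv).posSemidef.dotProduct_mulVec_nonneg v
  simpa using h

open Matrix Finset in
lemma tele {d T K : ℕ} {lam : ℝ} (hlam : 0 < lam) (x : Fin T → Fin d → ℝ)
    (a : Fin T → Fin K) :
    ∀ n, n ≤ T →
      ∑ b, Real.log ((Mdes lam x a n b).det) =
        (K : ℝ) * ((d : ℝ) * Real.log lam) +
        ∑ t ∈ Finset.univ.filter (fun t : Fin T => (t : ℕ) < n),
          Real.log (1 + (x t) ⬝ᵥ ((Mdes lam x a (t : ℕ) (a t))⁻¹ *ᵥ (x t))) := by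
  intro n
  induction n with
  | zero =>
    intro _
    have h0 : ∀ b, Mdes lam x a 0 b = lam • (1 : Matrix (Fin d) (Fin d) ℝ) := by
      intro b
      unfold Mdes
      have : Finset.univ.filter (fun s : Fin T => (s : ℕ) < 0 ∧ a s = b) = ∅ := by
        ext s; simp
      rw [this, Finset.sum_empty, add_zero]
    have hfilt : Finset.univ.filter (fun t : Fin T => (t : ℕ) < 0) = ∅ := by
      ext s; simp
    rw [hfilt, Finset.sum_empty, add_zero]
    have hdet : ∀ b : Fin K, Real.log ((Mdes lam x a 0 b).det) = (d : ℝ) * Real.log lam := by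
      intro b
      rw [h0 b, Matrix.det_smul, Matrix.det_one, mul_one, Fintype.card_fin,
        Real.log_pow]
    rw [Finset.sum_congr rfl (fun b _ => hdet b)]
    simp [mul_comm]
  | succ n ih =>
    intro hn1
    have hn : n < T := hn1
    have ihh := ih (le_of_lt hn)
    set tn : Fin T := ⟨n, hn⟩ with htn
    set qn : ℝ := (x tn) ⬝ᵥ ((Mdes lam x a n (a tn))⁻¹ *ᵥ (x tn)) with hqn
    have hqnn : 0 ≤ qn := q_nonneg hlam x a n (a tn) (x tn)
    have hlog : ∀ b, Real.log ((Mdes lam x a (n + 1) b).det) =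
        Real.log ((Mdes lam x a n b).det) +
        (if a tn = b then Real.log (1 + qn) else 0) := by
      intro b
      rw [Mdes_succ lam x a n hn b]
      by_cases h : a tn = b
      · rw [if_pos h, if_pos h, det_add_vmv (posdef_Mdes hlam x a n b) (x tn)]
        rw [Real.log_mul (posdef_Mdes hlam x a n b).det_pos.ne' (by subst h; positivity)]
        subst h
        rfl
      · rw [if_neg h, if_neg h, add_zero, add_zero]
    rw [Finset.sum_congr rfl (fun b _ => hlog b), Finset.sum_add_distrib,
      Finset.sum_ite_eq Finset.univ (a tn) (fun _ => Real.log (1 + qn)),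
      if_pos (Finset.mem_univ _), ihh]
    have hins : Finset.univ.filter (fun t : Fin T => (t : ℕ) < n + 1) =
        insert tn (Finset.univ.filter (fun t : Fin T => (t : ℕ) < n)) := by
      ext s
      simp only [Finset.mem_filter, Finset.mem_univ, true_and, Finset.mem_insert,
        Nat.lt_succ_iff_lt_or_eq, Fin.ext_iff]
      tauto
    have hnotmem : tn ∉ Finset.univ.filter (fun t : Fin T => (t : ℕ) < n) := by
      simp [htn]
    rw [hins, Finset.sum_insert hnotmem]
    ring

open Matrix Finset in
lemma trace_Mdes {d T K : ℕ} (lam : ℝ) (x : Fin T → Fin d → ℝ)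
    (a : Fin T → Fin K) (b : Fin K) :
    (Mdes lam x a T b).trace =
      (d : ℝ) * lam + ∑ s ∈ Finset.univ.filter (fun s : Fin T => a s = b),
        (∑ i, x s i ^ 2) := by
  unfold Mdes
  rw [Matrix.trace_add, Matrix.trace_smul, Matrix.trace_one, Matrix.trace_sum]
  have hf : Finset.univ.filter (fun s : Fin T => (s : ℕ) < T ∧ a s = b) =
      Finset.univ.filter (fun s : Fin T => a s = b) := by
    ext s; simp [s.isLt]
  rw [hf]
  congr 1
  · simp [Fintype.card_fin, mul_comm]
  · refine Finset.sum_congr rfl fun s _ => ?_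
    simp [Matrix.trace, Matrix.diag, Matrix.vecMulVec_apply, sq]

open Matrix Finset in
lemma logdet_bound {d T K : ℕ} (hd : 1 ≤ d) (hK : 1 ≤ K) (hT : 1 ≤ T)
    {lam β : ℝ} (hlam : 0 < lam) (hβ : 0 < β)
    (x : Fin T → Fin d → ℝ) (hx : ∀ t, norm2 (x t) ≤ β) (a : Fin T → Fin K) :
    ∑ b, Real.log ((Mdes lam x a T b).det) ≤
      (K : ℝ) * ((d : ℝ) * Real.log lam) +
        (d : ℝ) * K * Real.log (1 + β ^ 2 * T / (lam * d * K)) := by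
  have hdpos : (0:ℝ) < d := by exact_mod_cast hd
  have hKpos : (0:ℝ) < K := by exact_mod_cast hK
  have hTpos : (0:ℝ) < T := by exact_mod_cast hT
  set c0 : ℝ := lam + β ^ 2 * T / (d * K) with hc0
  have hc0pos : 0 < c0 := by positivity
  have hpd : ∀ b, (Mdes lam x a T b).PosDef := fun b => posdef_Mdes hlam x a T b
  -- log det = sum of log eigenvalues
  have hlogdet : ∀ b, Real.log ((Mdes lam x a T b).det) =
      ∑ i, Real.log ((hpd b).1.eigenvalues i) := by
    intro b
    have h1 : (Mdes lam x a T b).det = ∏ i, (hpd b).1.eigenvalues i := by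
      have := (hpd b).1.det_eq_prod_eigenvalues
      simpa using this
    rw [h1, Real.log_prod (fun i _ => ((hpd b).eigenvalues_pos i).ne')]
  -- each log eigenvalue bounded
  have key1 : ∀ μ : ℝ, 0 < μ → Real.log μ ≤ Real.log c0 + (μ / c0 - 1) := by
    intro μ hμ
    have h2 := Real.log_le_sub_one_of_pos (show 0 < μ / c0 by positivity)
    rw [Real.log_div hμ.ne' hc0pos.ne'] at h2
    linarith
  have step1 : ∑ b, Real.log ((Mdes lam x a T b).det) ≤
      ∑ b : Fin K, ∑ i : Fin d, (Real.log c0 + ((hpd b).1.eigenvalues i / c0 - 1)) := by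
    refine Finset.sum_le_sum fun b _ => ?_
    rw [hlogdet b]
    exact Finset.sum_le_sum fun i _ => key1 _ ((hpd b).eigenvalues_pos i)
  -- trace bound
  have htr : ∀ b, ∑ i, (hpd b).1.eigenvalues i = (Mdes lam x a T b).trace :=
    fun b => (trace_eq_sum_eigs (hpd b).1).symm
  have hxs : ∀ s, (∑ i, x s i ^ 2) ≤ β ^ 2 := by
    intro s
    have h := hx s
    unfold norm2 at h
    nlinarith [Real.sq_sqrt (show 0 ≤ ∑ i, x s i ^ 2 by positivity),
      Real.sqrt_nonneg (∑ i, x s i ^ 2)]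
  have htrace_sum : ∑ b, (Mdes lam x a T b).trace ≤ lam * d * K + β ^ 2 * T := by
    have h1 : ∑ b, (Mdes lam x a T b).trace =
        (K : ℝ) * ((d : ℝ) * lam) + ∑ s : Fin T, (∑ i, x s i ^ 2) := by
      rw [Finset.sum_congr rfl (fun b _ => trace_Mdes lam x a b), Finset.sum_add_distrib,
        Finset.sum_const, Finset.card_univ, Fintype.card_fin,
        Finset.sum_fiberwise_of_maps_to (fun s _ => Finset.mem_univ (a s))]
      simp [mul_comm, mul_assoc]
    rw [h1]
    have h2 : ∑ s : Fin T, (∑ i, x s i ^ 2) ≤ (T : ℝ) * β ^ 2 := by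
      calc ∑ s : Fin T, (∑ i, x s i ^ 2) ≤ ∑ _s : Fin T, β ^ 2 :=
            Finset.sum_le_sum fun s _ => hxs s
        _ = (T : ℝ) * β ^ 2 := by simp [mul_comm]
    nlinarith
  -- put it together
  have step2 : ∑ b : Fin K, ∑ i : Fin d, (Real.log c0 + ((hpd b).1.eigenvalues i / c0 - 1)) =
      (d : ℝ) * K * Real.log c0 + ((∑ b, (Mdes lam x a T b).trace) / c0 - d * K) := by
    have : ∀ b : Fin K, ∑ i : Fin d, (Real.log c0 + ((hpd b).1.eigenvalues i / c0 - 1)) =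
        (d : ℝ) * Real.log c0 + ((Mdes lam x a T b).trace / c0 - d) := by
      intro b
      rw [Finset.sum_add_distrib, Finset.sum_const, Finset.card_univ, Fintype.card_fin,
        ← htr b]
      rw [Finset.sum_sub_distrib, ← Finset.sum_div, Finset.sum_const, Finset.card_univ,
        Fintype.card_fin]
      simp [nsmul_eq_mul]
    rw [Finset.sum_congr rfl (fun b _ => this b), Finset.sum_add_distrib,
      Finset.sum_sub_distrib, ← Finset.sum_div, Finset.sum_const, Finset.card_univ,
      Fintype.card_fin]
    simp only [Finset.sum_const, Finset.card_univ, Fintype.card_fin, nsmul_eq_mul]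
    push_cast
    ring
  have hc0eq : c0 = lam * (1 + β ^ 2 * T / (lam * d * K)) := by
    field_simp [hc0]
    rw [hc0]; field_simp
  have hlogc0 : Real.log c0 = Real.log lam + Real.log (1 + β ^ 2 * T / (lam * d * K)) := by
    rw [hc0eq, Real.log_mul hlam.ne' (by positivity)]
  have htrdiv : (∑ b, (Mdes lam x a T b).trace) / c0 - (d : ℝ) * K ≤ 0 := by
    have hfld : (d : ℝ) * K * (β ^ 2 * T / (d * K)) = β ^ 2 * T := by
      field_simp
    have h3 : (∑ b, (Mdes lam x a T b).trace) ≤ (d : ℝ) * K * c0 := by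
      rw [hc0]
      nlinarith [htrace_sum]
    have h4 : (∑ b, (Mdes lam x a T b).trace) / c0 ≤ (d : ℝ) * K := by
      rw [div_le_iff₀ hc0pos]
      linarith
    linarith
  calc ∑ b, Real.log ((Mdes lam x a T b).det) ≤ _ := step1
    _ = _ := step2
    _ ≤ (d : ℝ) * K * Real.log c0 := by linarith
    _ = (K : ℝ) * ((d : ℝ) * Real.log lam) +
        (d : ℝ) * K * Real.log (1 + β ^ 2 * T / (lam * d * K)) := by
      rw [hlogc0]; ring

lemma half_log (u : ℝ) (h0 : 0 ≤ u) (h1 : u ≤ 1) : u ≤ 2 * Real.log (1 + u) := by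
  have hpos : (0:ℝ) < 1 + u := by linarith
  have h2 := Real.log_le_sub_one_of_pos (show (0:ℝ) < (1 + u)⁻¹ by positivity)
  rw [Real.log_inv] at h2
  have h3 : (1 + u) * (1 + u)⁻¹ = 1 := mul_inv_cancel₀ hpos.ne'
  nlinarith [h2, h3, mul_nonneg (sub_nonneg.mpr h1) h0]

open Matrix in
noncomputable def qq {d T K : ℕ} (lam : ℝ) (x : Fin T → Fin d → ℝ)
    (a : Fin T → Fin K) (t : Fin T) : ℝ :=
  (x t) ⬝ᵥ ((Mdes lam x a (t : ℕ) (a t))⁻¹ *ᵥ (x t))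

/-- LLM-effort guarantee (deterministic core): the number of rounds in which the
confidence width `2Lρ·‖x_t‖_{V_{t,a_t}⁻¹}` exceeds the threshold `Δ` (triggering an
LLM query) is at most `(8L²ρ²/Δ²)·d·K·log(1 + β²T/(λdK))`. -/
theorem libra_llm_effort_guarantee
    (d K T : ℕ) (hd : 1 ≤ d) (hK : 1 ≤ K) (hT : 1 ≤ T)
    (lam β L ρ Δ : ℝ) (hlam : 0 < lam) (hβ : 0 < β) (hL : 0 < L)
    (hρ : 0 < ρ) (hΔ : 0 < Δ) (hΔ2 : Δ ≤ 2 * L * ρ)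
    (x : Fin T → Fin d → ℝ) (hx : ∀ t, norm2 (x t) ≤ β)
    (a : Fin T → Fin K) :
    ((Finset.univ.filter
        (fun t : Fin T => Δ < 2 * L * ρ * normV (design lam x a t (a t))⁻¹ (x t))).card : ℝ)
      ≤ (8 * L ^ 2 * ρ ^ 2 / Δ ^ 2) * d * K
          * Real.log (1 + β ^ 2 * T / (lam * d * K)) := by
  classical
  set S := Finset.univ.filter
      (fun t : Fin T => Δ < 2 * L * ρ * normV (design lam x a t (a t))⁻¹ (x t)) with hS
  have hqnn : ∀ t, 0 ≤ qq lam x a t := fun t => q_nonneg hlam x a _ _ _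
  have hnorm : ∀ t : Fin T,
      normV (design lam x a t (a t))⁻¹ (x t) = Real.sqrt (qq lam x a t) := fun t => rfl
  set c : ℝ := Δ ^ 2 / (4 * L ^ 2 * ρ ^ 2) with hc
  have hcpos : 0 < c := by positivity
  have hc1 : c ≤ 1 := by
    rw [hc, div_le_one (by positivity)]
    nlinarith
  have hqS : ∀ t ∈ S, c < qq lam x a t := by
    intro t ht
    rw [hS, Finset.mem_filter] at ht
    have h1 := ht.2
    rw [hnorm t] at h1
    have h2 : Δ / (2 * L * ρ) < Real.sqrt (qq lam x a t) := by
      rw [div_lt_iff₀ (by positivity)]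
      linarith
    have h4 : (Δ / (2 * L * ρ)) * (Δ / (2 * L * ρ)) <
        Real.sqrt (qq lam x a t) * Real.sqrt (qq lam x a t) :=
      mul_self_lt_mul_self (by positivity) h2
    have h5 : Real.sqrt (qq lam x a t) * Real.sqrt (qq lam x a t) = qq lam x a t :=
      Real.mul_self_sqrt (hqnn t)
    have h6 : (Δ / (2 * L * ρ)) * (Δ / (2 * L * ρ)) = c := by
      rw [hc]; field_simp; ring
    rw [h5, h6] at h4
    exact h4
  have hlogS : ∀ t ∈ S, c ≤ 2 * Real.log (1 + qq lam x a t) := by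
    intro t ht
    rcases le_or_gt (qq lam x a t) 1 with h | h
    · linarith [half_log (qq lam x a t) (hqnn t) h, hqS t ht]
    · have h2 : Real.log 2 ≤ Real.log (1 + qq lam x a t) :=
        Real.log_le_log (by norm_num) (by linarith)
      have h3 : (0.6931471803 : ℝ) < Real.log 2 := Real.log_two_gt_d9
      linarith
  have hkey : ∑ t, Real.log (1 + qq lam x a t) ≤
      (d : ℝ) * K * Real.log (1 + β ^ 2 * T / (lam * d * K)) := by
    have h1 : ∑ b, Real.log ((Mdes lam x a T b).det) =
        (K : ℝ) * ((d : ℝ) * Real.log lam) +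
        ∑ t ∈ Finset.univ.filter (fun t : Fin T => (t : ℕ) < T),
          Real.log (1 + qq lam x a t) := tele hlam x a T le_rfl
    have h2 := logdet_bound hd hK hT hlam hβ x hx a
    have hfilt : Finset.univ.filter (fun t : Fin T => (t : ℕ) < T) = Finset.univ := by
      ext t; simp [t.isLt]
    rw [hfilt] at h1
    linarith
  have hlognn : ∀ t, 0 ≤ Real.log (1 + qq lam x a t) :=
    fun t => Real.log_nonneg (by linarith [hqnn t])
  have hcard : (S.card : ℝ) * c ≤ ∑ t ∈ S, (2 * Real.log (1 + qq lam x a t)) := by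
    calc (S.card : ℝ) * c = ∑ _t ∈ S, c := by rw [Finset.sum_const, nsmul_eq_mul]
      _ ≤ _ := Finset.sum_le_sum hlogS
  have hsub : ∑ t ∈ S, (2 * Real.log (1 + qq lam x a t)) ≤
      ∑ t : Fin T, (2 * Real.log (1 + qq lam x a t)) :=
    Finset.sum_le_sum_of_subset_of_nonneg (Finset.subset_univ S)
      (fun t _ _ => mul_nonneg (by norm_num) (hlognn t))
  have hfin : (S.card : ℝ) * c ≤
      2 * ((d : ℝ) * K * Real.log (1 + β ^ 2 * T / (lam * d * K))) := by
    have hmul : ∑ t : Fin T, (2 * Real.log (1 + qq lam x a t)) =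
        2 * ∑ t, Real.log (1 + qq lam x a t) := by rw [Finset.mul_sum]
    rw [hmul] at hsub
    linarith
  have hfinal : (S.card : ℝ) ≤
      2 * ((d : ℝ) * K * Real.log (1 + β ^ 2 * T / (lam * d * K))) / c :=
    (le_div_iff₀ hcpos).mpr hfin
  calc (S.card : ℝ) ≤ _ := hfinal
    _ = (8 * L ^ 2 * ρ ^ 2 / Δ ^ 2) * d * K
        * Real.log (1 + β ^ 2 * T / (lam * d * K)) := by
      rw [hc]; field_simp; ring
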